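/- Let Z_1, Z_2 be i.i.d. with density θ z^{θ−1} e^{−z^θ} on (0,∞). Then E[√(Z_1² + Z_2²)] = Γ(2 + 1/θ) · ∫_0^1 (t^{2/θ} + (1−t)^{2/θ})^{1/2} dt. -/

import Mathlib

open Real MeasureTheory ProbabilityTheory

open scoped ENNReal

/-- 1D change of variables for lower Lebesgue integrals. -/
lemma lint_image_1d {s : Set ℝ} {f f' : ℝ → ℝ}
    (hs : MeasurableSet s) (hf' : ∀ x ∈ s, HasDerivWithinAt f (f' x) s x)
    (hf : Set.InjOn f s) (g : ℝ → ℝ≥0∞) :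
    ∫⁻ x in f '' s, g x = ∫⁻ x in s, ENNReal.ofReal |f' x| * g (f x) := by
  simpa only [ContinuousLinearMap.det_toSpanSingleton] using
    lintegral_image_eq_lintegral_abs_det_fderiv_mul volume hs
      (fun x hx => (hf' x hx).hasFDerivWithinAt) hf g

/-- Substitution z = u^(1/θ) turning the Weibull density into the exponential one. -/
lemma subA {θ : ℝ} (hθ : 0 < θ) (g : ℝ → ℝ≥0∞) :
    ∫⁻ z, ENNReal.ofReal (if 0 < z then θ * z ^ (θ - 1) * Real.exp (-z ^ θ) else 0) * g z
      = ∫⁻ u in Set.Ioi 0, ENNReal.ofReal (Real.exp (-u)) * g (u ^ (1/θ)) := by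
  have hθ' : θ ≠ 0 := ne_of_gt hθ
  have h1 : ∀ z : ℝ,
      ENNReal.ofReal (if 0 < z then θ * z ^ (θ - 1) * Real.exp (-z ^ θ) else 0) * g z
      = (Set.Ioi (0:ℝ)).indicator
          (fun z => ENNReal.ofReal (θ * z ^ (θ - 1) * Real.exp (-z ^ θ)) * g z) z := by
    intro z
    by_cases hz : 0 < z
    · simp [Set.indicator_of_mem, hz]
    · simp [Set.indicator_of_notMem, hz]
  simp only [h1]
  rw [lintegral_indicator measurableSet_Ioi]
  have himg : Set.Ioi (0:ℝ) = (fun u : ℝ => u ^ (1/θ)) '' Set.Ioi 0 := by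
    ext z
    simp only [Set.mem_image, Set.mem_Ioi]
    constructor
    · intro hz
      refine ⟨z ^ θ, Real.rpow_pos_of_pos hz θ, ?_⟩
      rw [one_div, Real.rpow_rpow_inv hz.le hθ']
    · rintro ⟨u, hu, rfl⟩
      exact Real.rpow_pos_of_pos hu _
  have hderiv : ∀ u ∈ Set.Ioi (0:ℝ),
      HasDerivWithinAt (fun u : ℝ => u ^ (1/θ)) (1/θ * u ^ (1/θ - 1)) (Set.Ioi 0) u :=
    fun u hu => (Real.hasDerivAt_rpow_const (Or.inl (ne_of_gt hu))).hasDerivWithinAt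
  have hinj : Set.InjOn (fun u : ℝ => u ^ (1/θ)) (Set.Ioi 0) := by
    intro a ha b hb hab
    have := congrArg (fun x : ℝ => x ^ θ) hab
    simpa [one_div, Real.rpow_inv_rpow (le_of_lt ha) hθ',
      Real.rpow_inv_rpow (le_of_lt hb) hθ'] using this
  conv_lhs => rw [himg, lint_image_1d measurableSet_Ioi hderiv hinj]
  apply lintegral_congr_ae
  filter_upwards [ae_restrict_mem measurableSet_Ioi] with u hu
  have hu0 : (0:ℝ) < u := hu
  have hw : (0:ℝ) < u ^ (1/θ) := Real.rpow_pos_of_pos hu0 _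
  have hwθ : (u ^ (1/θ)) ^ θ = u := by
    rw [one_div, Real.rpow_inv_rpow hu0.le hθ']
  have habs : |1/θ * u ^ (1/θ - 1)| = 1/θ * u ^ (1/θ - 1) := by
    refine abs_of_pos ?_
    positivity
  rw [habs, ← mul_assoc, ← ENNReal.ofReal_mul (by positivity)]
  congr 1
  rw [hwθ]
  rw [← Real.rpow_mul hu0.le (1/θ) (θ - 1)]
  rw [show 1/θ * u ^ (1/θ - 1) * (θ * u ^ (1/θ * (θ - 1)) * Real.exp (-u))
      = (1/θ * θ) * (u ^ (1/θ - 1) * u ^ (1/θ * (θ - 1))) * Real.exp (-u) by ring]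
  rw [one_div_mul_cancel hθ', ← Real.rpow_add hu0]
  rw [show 1/θ - 1 + 1/θ * (θ - 1) = 0 by field_simp; ring]
  simp

/-- Translation substitution. -/
lemma subB (u : ℝ) (G : ℝ → ℝ≥0∞) :
    ∫⁻ v in Set.Ioi 0, G v = ∫⁻ s in Set.Ioi u, G (s - u) := by
  have himg : Set.Ioi (0:ℝ) = (fun s : ℝ => s - u) '' Set.Ioi u := by
    rw [Set.image_sub_const_Ioi, sub_self]
  have hderiv : ∀ s ∈ Set.Ioi u,
      HasDerivWithinAt (fun s : ℝ => s - u) 1 (Set.Ioi u) s :=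
    fun s _ => ((hasDerivAt_id s).sub_const u).hasDerivWithinAt
  have hinj : Set.InjOn (fun s : ℝ => s - u) (Set.Ioi u) :=
    fun a _ b _ h => by simpa using congrArg (· + u) h
  conv_lhs => rw [himg, lint_image_1d measurableSet_Ioi hderiv hinj]
  simp

/-- Scaling substitution. -/
lemma subC {s : ℝ} (hs : 0 < s) (K : ℝ → ℝ≥0∞) :
    ∫⁻ x in Set.Ioo 0 s, K x = ∫⁻ t in Set.Ioo 0 1, ENNReal.ofReal s * K (s * t) := by
  have himg : Set.Ioo (0:ℝ) s = (fun t : ℝ => s * t) '' Set.Ioo 0 1 := by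
    rw [Set.image_mul_left_Ioo hs, mul_zero, mul_one]
  have hderiv : ∀ t ∈ Set.Ioo (0:ℝ) 1,
      HasDerivWithinAt (fun t : ℝ => s * t) s (Set.Ioo 0 1) t := by
    intro t _
    simpa using ((hasDerivAt_id t).const_mul s).hasDerivWithinAt
  have hinj : Set.InjOn (fun t : ℝ => s * t) (Set.Ioo 0 1) :=
    fun a _ b _ h => by
      exact mul_left_cancel₀ (ne_of_gt hs) h
  rw [himg, lint_image_1d measurableSet_Ioo hderiv hinj, abs_of_pos hs]

/-- Gamma integral as a lower Lebesgue integral. -/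
lemma gamma_lint {a : ℝ} (ha : 0 < a) :
    ∫⁻ s in Set.Ioi 0, ENNReal.ofReal (Real.exp (-s) * s ^ (a - 1))
      = ENNReal.ofReal (Real.Gamma a) := by
  rw [Real.Gamma_eq_integral ha]
  rw [← ofReal_integral_eq_lintegral_ofReal (Real.GammaIntegral_convergent ha)]
  filter_upwards [ae_restrict_mem measurableSet_Ioi] with s hs
  have : (0:ℝ) < s := hs
  positivity

/-- For i.i.d. `Z₁, Z₂` with density `θ z^{θ-1} e^{-z^θ}` on
`(0,∞)`, the expected Euclidean norm is
`E[√(Z₁² + Z₂²)] = Γ(2 + 1/θ) ∫₀¹ (t^{2/θ} + (1-t)^{2/θ})^{1/2} dt`. -/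
theorem stmt18 {Ω : Type*} [MeasurableSpace Ω] (μ : Measure Ω) [IsProbabilityMeasure μ]
    (θ : ℝ) (hθ : 0 < θ) (Z : Fin 2 → Ω → ℝ) (hmeas : ∀ i, Measurable (Z i))
    (hiid : iIndepFun Z μ)
    (hdens : ∀ i, Measure.map (Z i) μ
      = volume.withDensity (fun z => ENNReal.ofReal
          (if 0 < z then θ * z ^ (θ - 1) * Real.exp (-z ^ θ) else 0))) :
    ∫ ω, Real.sqrt ((Z 0 ω) ^ 2 + (Z 1 ω) ^ 2) ∂μ
      = Real.Gamma (2 + 1/θ) *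
        ∫ t in Set.Icc (0:ℝ) 1, (t ^ (2/θ) + (1 - t) ^ (2/θ)) ^ ((1:ℝ)/2) := by
  have hθ' : θ ≠ 0 := ne_of_gt hθ
  set f₀ : ℝ → ℝ≥0∞ := fun z => ENNReal.ofReal
      (if 0 < z then θ * z ^ (θ - 1) * Real.exp (-z ^ θ) else 0) with hf₀
  have hf₀meas : Measurable f₀ := by
    apply Measurable.ennreal_ofReal
    apply Measurable.ite measurableSet_Ioi
    · fun_prop
    · fun_prop
  have hf₀lt : ∀ᵐ z ∂(volume : Measure ℝ), f₀ z < ⊤ :=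
    ae_of_all _ fun z => ENNReal.ofReal_lt_top
  set c : ℝ → ℝ≥0∞ := fun t =>
      ENNReal.ofReal ((t ^ (2/θ) + (1 - t) ^ (2/θ)) ^ ((1:ℝ)/2)) with hcdef
  set J : ℝ≥0∞ := ∫⁻ t in Set.Ioo (0:ℝ) 1, c t with hJdef
  set Q : ℝ → ℝ → ℝ≥0∞ := fun u v =>
      ENNReal.ofReal ((u ^ (2/θ) + v ^ (2/θ)) ^ ((1:ℝ)/2)) with hQdef
  -- Step 1: to the product measure
  have hind : IndepFun (Z 0) (Z 1) μ := hiid.indepFun (by decide : (0 : Fin 2) ≠ 1)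
  have hmap : μ.map (fun ω => (Z 0 ω, Z 1 ω)) = (μ.map (Z 0)).prod (μ.map (Z 1)) :=
    (indepFun_iff_map_prod_eq_prod_map_map (hmeas 0).aemeasurable
      (hmeas 1).aemeasurable).mp hind
  have hNmeas : Measurable fun p : ℝ × ℝ =>
      ENNReal.ofReal (Real.sqrt (p.1 ^ 2 + p.2 ^ 2)) := by fun_prop
  haveI hP1 : IsProbabilityMeasure (μ.map (Z 1)) :=
    Measure.isProbabilityMeasure_map (hmeas 1).aemeasurable
  have key : ∫⁻ ω, ENNReal.ofReal (Real.sqrt ((Z 0 ω) ^ 2 + (Z 1 ω) ^ 2)) ∂μ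
      = ENNReal.ofReal (Real.Gamma (2 + 1/θ)) * J := by
    have e1 : ∫⁻ ω, ENNReal.ofReal (Real.sqrt ((Z 0 ω) ^ 2 + (Z 1 ω) ^ 2)) ∂μ
        = ∫⁻ x, ∫⁻ y, ENNReal.ofReal (Real.sqrt (x ^ 2 + y ^ 2)) ∂(μ.map (Z 1))
            ∂(μ.map (Z 0)) := by
      rw [← lintegral_prod _ hNmeas.aemeasurable, ← hmap,
        lintegral_map hNmeas ((hmeas 0).prodMk (hmeas 1))]
    rw [e1, hdens 0,
      lintegral_withDensity_eq_lintegral_mul_non_measurable _ hf₀meas hf₀lt]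
    have e2 : ∫⁻ x, f₀ x * ∫⁻ y, ENNReal.ofReal (Real.sqrt (x ^ 2 + y ^ 2)) ∂(μ.map (Z 1))
        = ∫⁻ u in Set.Ioi 0, ENNReal.ofReal (Real.exp (-u)) *
            ∫⁻ y, ENNReal.ofReal (Real.sqrt ((u ^ (1/θ)) ^ 2 + y ^ 2)) ∂(μ.map (Z 1)) :=
      subA hθ _
    rw [show (fun x => (f₀ * fun x => ∫⁻ y, ENNReal.ofReal (Real.sqrt (x ^ 2 + y ^ 2))
        ∂(μ.map (Z 1))) x) = fun x => f₀ x * ∫⁻ y,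
        ENNReal.ofReal (Real.sqrt (x ^ 2 + y ^ 2)) ∂(μ.map (Z 1)) from rfl, e2]
    -- inner integral
    have e3 : ∀ u : ℝ, 0 < u →
        (∫⁻ y, ENNReal.ofReal (Real.sqrt ((u ^ (1/θ)) ^ 2 + y ^ 2)) ∂(μ.map (Z 1)))
        = ∫⁻ v in Set.Ioi 0, ENNReal.ofReal (Real.exp (-v)) * Q u v := by
      intro u hu
      rw [hdens 1, lintegral_withDensity_eq_lintegral_mul_non_measurable _ hf₀meas hf₀lt]
      rw [show (fun y => (f₀ * fun y => ENNReal.ofReal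
          (Real.sqrt ((u ^ (1/θ)) ^ 2 + y ^ 2))) y) = fun y => f₀ y * ENNReal.ofReal
          (Real.sqrt ((u ^ (1/θ)) ^ 2 + y ^ 2)) from rfl]
      rw [subA hθ _]
      apply lintegral_congr_ae
      filter_upwards [ae_restrict_mem measurableSet_Ioi] with v hv
      simp only [hQdef]
      have h2 : ∀ w : ℝ, 0 < w → (w ^ (1/θ)) ^ 2 = w ^ (2/θ) := by
        intro w hw
        rw [← Real.rpow_natCast (w ^ (1/θ)) 2, ← Real.rpow_mul hw.le]
        congr 1
        push_cast
        ring
      rw [Real.sqrt_eq_rpow, h2 u hu, h2 v hv]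
    have e4 : ∫⁻ u in Set.Ioi 0, ENNReal.ofReal (Real.exp (-u)) *
          ∫⁻ y, ENNReal.ofReal (Real.sqrt ((u ^ (1/θ)) ^ 2 + y ^ 2)) ∂(μ.map (Z 1))
        = ∫⁻ u in Set.Ioi 0, ∫⁻ s in Set.Ioi u,
            ENNReal.ofReal (Real.exp (-s)) * Q u (s - u) := by
      apply lintegral_congr_ae
      filter_upwards [ae_restrict_mem measurableSet_Ioi] with u hu
      rw [e3 u hu, subB u, ← lintegral_const_mul' _ _ ENNReal.ofReal_ne_top]
      apply lintegral_congr_ae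
      filter_upwards [ae_restrict_mem measurableSet_Ioi] with s _
      rw [← mul_assoc, ← ENNReal.ofReal_mul (Real.exp_nonneg _), ← Real.exp_add]
      ring_nf
    rw [e4]
    -- swap the order of integration
    set P : ℝ × ℝ → ℝ≥0∞ := fun p =>
        if 0 < p.1 ∧ p.1 < p.2 then ENNReal.ofReal (Real.exp (-p.2)) * Q p.1 (p.2 - p.1)
        else 0 with hPdef
    have hPmeas : Measurable P := by
      apply Measurable.ite
      · exact (measurableSet_lt measurable_const measurable_fst).inter
          (measurableSet_lt measurable_fst measurable_snd)
      · fun_prop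
      · fun_prop
    have s1 : ∫⁻ u in Set.Ioi 0, ∫⁻ s in Set.Ioi u,
          ENNReal.ofReal (Real.exp (-s)) * Q u (s - u)
        = ∫⁻ u, ∫⁻ s, P (u, s) := by
      rw [← lintegral_indicator measurableSet_Ioi]
      apply lintegral_congr
      intro u
      by_cases hu : 0 < u
      · rw [Set.indicator_of_mem (Set.mem_Ioi.mpr hu)]
        rw [← lintegral_indicator measurableSet_Ioi]
        apply lintegral_congr
        intro s
        by_cases hs : u < s
        · rw [Set.indicator_of_mem (Set.mem_Ioi.mpr hs), hPdef]
          simp [hu, hs]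
        · rw [Set.indicator_of_notMem (by simpa using hs), hPdef]
          simp [hu, hs]
      · rw [Set.indicator_of_notMem (by simpa using hu)]
        symm
        simp only [hPdef, hu, false_and, if_false]
        exact lintegral_zero
    rw [s1, lintegral_lintegral_swap hPmeas.aemeasurable]
    -- compute the inner u-integral for fixed s
    have s2 : ∀ s : ℝ, (∫⁻ u, P (u, s))
        = (Set.Ioi (0:ℝ)).indicator (fun s => ENNReal.ofReal (Real.exp (-s)) *
            (ENNReal.ofReal s * (ENNReal.ofReal (s ^ (1/θ)) * J))) s := by
      intro s
      by_cases hs : 0 < s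
      · rw [Set.indicator_of_mem (Set.mem_Ioi.mpr hs)]
        have i1 : ∫⁻ u, P (u, s) = ∫⁻ u in Set.Ioo 0 s,
            ENNReal.ofReal (Real.exp (-s)) * Q u (s - u) := by
          rw [← lintegral_indicator measurableSet_Ioo]
          apply lintegral_congr
          intro u
          by_cases hu : 0 < u ∧ u < s
          · rw [Set.indicator_of_mem (Set.mem_Ioo.mpr hu), hPdef]
            simp [hu.1, hu.2]
          · rw [Set.indicator_of_notMem (by simpa [Set.mem_Ioo] using hu), hPdef]
            simp [hu]
        rw [i1]
        have i2 : ∀ t : ℝ, t ∈ Set.Ioo (0:ℝ) 1 →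
            ENNReal.ofReal s * Q (s * t) (s - s * t)
            = ENNReal.ofReal s * (ENNReal.ofReal (s ^ (1/θ)) * c t) := by
          intro t ht
          congr 1
          simp only [hQdef, hcdef]
          have hst : s - s * t = s * (1 - t) := by ring
          rw [hst]
          rw [Real.mul_rpow hs.le ht.1.le, Real.mul_rpow hs.le (by linarith [ht.2] : (0:ℝ) ≤ 1 - t)]
          rw [← mul_add, Real.mul_rpow (Real.rpow_nonneg hs.le _)
            (add_nonneg (Real.rpow_nonneg ht.1.le _)
              (Real.rpow_nonneg (by linarith [ht.2] : (0:ℝ) ≤ 1 - t) _))]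
          rw [← Real.rpow_mul hs.le]
          rw [show 2/θ * (1/2) = 1/θ by ring]
          rw [ENNReal.ofReal_mul (Real.rpow_nonneg hs.le _)]
        calc ∫⁻ u in Set.Ioo 0 s, ENNReal.ofReal (Real.exp (-s)) * Q u (s - u)
            = ENNReal.ofReal (Real.exp (-s)) * ∫⁻ u in Set.Ioo 0 s, Q u (s - u) :=
              lintegral_const_mul' _ _ ENNReal.ofReal_ne_top
          _ = ENNReal.ofReal (Real.exp (-s)) * ∫⁻ t in Set.Ioo 0 1,
                ENNReal.ofReal s * Q (s * t) (s - s * t) := by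
              rw [subC hs]
          _ = ENNReal.ofReal (Real.exp (-s)) * ∫⁻ t in Set.Ioo 0 1,
                ENNReal.ofReal s * (ENNReal.ofReal (s ^ (1/θ)) * c t) := by
              congr 1
              apply lintegral_congr_ae
              filter_upwards [ae_restrict_mem measurableSet_Ioo] with t ht
              exact i2 t ht
          _ = ENNReal.ofReal (Real.exp (-s)) *
                (ENNReal.ofReal s * (ENNReal.ofReal (s ^ (1/θ)) * J)) := by
              rw [lintegral_const_mul' _ _ ENNReal.ofReal_ne_top,
                lintegral_const_mul' _ _ ENNReal.ofReal_ne_top, ← hJdef]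
      · rw [Set.indicator_of_notMem (by simpa using hs)]
        have : ∀ u : ℝ, P (u, s) = 0 := by
          intro u
          rw [hPdef]
          have : ¬ (0 < u ∧ u < s) := by rintro ⟨h1, h2⟩; linarith
          simp [this]
        simp only [this]
        exact lintegral_zero
    calc ∫⁻ s, ∫⁻ u, P (u, s)
        = ∫⁻ s, (Set.Ioi (0:ℝ)).indicator (fun s => ENNReal.ofReal (Real.exp (-s)) *
            (ENNReal.ofReal s * (ENNReal.ofReal (s ^ (1/θ)) * J))) s := by
          exact lintegral_congr s2
      _ = ∫⁻ s in Set.Ioi 0, ENNReal.ofReal (Real.exp (-s)) *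
            (ENNReal.ofReal s * (ENNReal.ofReal (s ^ (1/θ)) * J)) := by
          rw [lintegral_indicator measurableSet_Ioi]
      _ = ∫⁻ s in Set.Ioi 0, ENNReal.ofReal (Real.exp (-s) * s ^ (2 + 1/θ - 1)) * J := by
          apply lintegral_congr_ae
          filter_upwards [ae_restrict_mem measurableSet_Ioi] with s hs
          have hs0 : (0:ℝ) < s := hs
          rw [show 2 + 1/θ - 1 = 1 + 1/θ by ring, Real.rpow_add hs0, Real.rpow_one,
            ENNReal.ofReal_mul (Real.exp_nonneg _),
            ENNReal.ofReal_mul (le_of_lt hs0)]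
          ring
      _ = (∫⁻ s in Set.Ioi 0, ENNReal.ofReal (Real.exp (-s) * s ^ (2 + 1/θ - 1))) * J := by
          apply lintegral_mul_const
          fun_prop
      _ = ENNReal.ofReal (Real.Gamma (2 + 1/θ)) * J := by
          rw [gamma_lint (by positivity : (0:ℝ) < 2 + 1/θ)]
  -- final conversion from lintegrals to Bochner integrals
  have hGnn : 0 ≤ Real.Gamma (2 + 1/θ) :=
    (Real.Gamma_pos_of_pos (by positivity)).le
  have hsqrtmeas : Measurable fun ω => Real.sqrt ((Z 0 ω) ^ 2 + (Z 1 ω) ^ 2) := by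
    apply Real.continuous_sqrt.measurable.comp
    exact ((hmeas 0).pow_const 2).add ((hmeas 1).pow_const 2)
  have hL : ∫ ω, Real.sqrt ((Z 0 ω) ^ 2 + (Z 1 ω) ^ 2) ∂μ
      = (ENNReal.ofReal (Real.Gamma (2 + 1/θ)) * J).toReal := by
    rw [integral_eq_lintegral_of_nonneg_ae (ae_of_all _ fun ω => Real.sqrt_nonneg _)
      hsqrtmeas.aestronglyMeasurable, key]
  have hR : ∫ t in Set.Icc (0:ℝ) 1, (t ^ (2/θ) + (1 - t) ^ (2/θ)) ^ ((1:ℝ)/2)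
      = J.toReal := by
    rw [integral_eq_lintegral_of_nonneg_ae]
    · congr 1
      rw [hJdef, ← Measure.restrict_congr_set Ioo_ae_eq_Icc]
    · filter_upwards [ae_restrict_mem measurableSet_Icc] with t ht
      simp only [Pi.zero_apply]
      have h1 : (0:ℝ) ≤ t := ht.1
      have h2 : (0:ℝ) ≤ 1 - t := by linarith [ht.2]
      exact Real.rpow_nonneg (by positivity) _
    · apply Measurable.aestronglyMeasurable
      fun_prop
  rw [hL, hR, ENNReal.toReal_mul, ENNReal.toReal_ofReal hGnn]
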